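/- Let 1 ≤ q < p < ∞ and let μ, ν be Borel measures on ℝⁿ. Suppose there exists a constant A such that for every nonnegative Lipschitz function g : ℝⁿ → ℝ one has the weak type estimate sup_{t>0} t · μ({x ∈ ℝⁿ : g(x) > t})^{1/p} ≤ A ( ∫_{ℝⁿ} |∇g|^q dν )^{1/q}. Then there exists a constant C, depending only on p and q, such that for every nonnegative Lipschitz function g : ℝⁿ → ℝ the strong estimate holds: ( ∫_{ℝⁿ} g^p dμ )^{1/p} ≤ C · A · ( ∫_{ℝⁿ} |∇g|^q dν )^{1/q}. -/

import Mathlib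

open MeasureTheory Set
open scoped ENNReal NNReal

noncomputable section

/-- `n`-dimensional Euclidean space. -/
abbrev ES (n : ℕ) := EuclideanSpace ℝ (Fin n)

/-- The extended-nonnegative-real absolute value of a real number. -/
def en (r : ℝ) : ℝ≥0∞ := (‖r‖₊ : ℝ≥0∞)

/-- A rectangle in `ℝⁿ` with sides parallel to the coordinate axes, given by its
(nondegenerate, bounded) interval endpoints. -/
structure Rect (n : ℕ) where
  lo : Fin n → ℝ
  hi : Fin n → ℝ
  lt : ∀ i, lo i < hi i

/-- The underlying set of a rectangle (half-open, so that dyadic pieces are disjoint). -/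
def Rect.set {n : ℕ} (R : Rect n) : Set (ES n) :=
  {x | ∀ i, x i ∈ Set.Ico (R.lo i) (R.hi i)}

/-- The (Euclidean) diameter of a rectangle. -/
def Rect.diam {n : ℕ} (R : Rect n) : ℝ :=
  Real.sqrt (∑ i, (R.hi i - R.lo i) ^ 2)

/-- `R.DyadicSub S` : `S` is a dyadic subrectangle of `R`, i.e. is obtained from `R`
by finitely many iterated passages to dyadic children (bisection of every side);
at generation `j` each side of `R` is split into `2^j` equal parts. -/
def Rect.DyadicSub {n : ℕ} (R S : Rect n) : Prop :=
  ∃ (j : ℕ) (k : Fin n → ℕ), (∀ i, k i < 2 ^ j) ∧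
    (∀ i, S.lo i = R.lo i + (k i : ℝ) * (R.hi i - R.lo i) / 2 ^ j) ∧
    (∀ i, S.hi i = R.lo i + ((k i : ℝ) + 1) * (R.hi i - R.lo i) / 2 ^ j)

/-- The eccentricity `e(R) = |R|^{1/n} / d(R)` of a rectangle. -/
def eccen {n : ℕ} (R : Rect n) : ℝ :=
  (volume R.set).toReal ^ ((1 : ℝ) / n) / R.diam

/-- An axis-parallel (half-open) cube with corner `a` and sidelength `ℓ`. -/
def cubeSet {n : ℕ} (a : Fin n → ℝ) (ℓ : ℝ) : Set (ES n) :=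
  {x | ∀ i, x i ∈ Set.Ico (a i) (a i + ℓ)}

section Weights

variable {X : Type} [MeasureSpace X]

/-- A weight, seen as an `ℝ≥0∞`-valued density. -/
def wE (w : X → ℝ) (x : X) : ℝ≥0∞ := ENNReal.ofReal (w x)

/-- `w(E) = ∫_E w dx`. -/
def wMeas (w : X → ℝ) (E : Set X) : ℝ≥0∞ := ∫⁻ x in E, wE w x

/-- The average `(1/|E|) ∫_E g` (with values in `ℝ≥0∞`). -/
def lavg (g : X → ℝ≥0∞) (E : Set X) : ℝ≥0∞ := (∫⁻ x in E, g x) / volume E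

/-- The Muckenhoupt `A_q` constant of the weight `w` relative to the family `F` of sets:
for `q = 1` it is the least `c` with `⨍_E w ≤ c · essinf_E w` for all `E ∈ F`, and for
`q ≠ 1` it is `sup_{E ∈ F} (⨍_E w)(⨍_E w^{-1/(q-1)})^{q-1}`. -/
def aqConstOn (F : Set (Set X)) (q : ℝ) (w : X → ℝ) : ℝ≥0∞ :=
  if q = 1 then
    sInf {c : ℝ≥0∞ | ∀ E ∈ F, lavg (wE w) E ≤ c * essInf (wE w) (volume.restrict E)}
  else
    ⨆ E ∈ F, lavg (wE w) E * (lavg (fun x => wE w x ^ (-1 / (q - 1))) E) ^ (q - 1)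

/-- The maximal operator associated to the family `F`. -/
def famMaxOn (F : Set (Set X)) (g : X → ℝ≥0∞) (x : X) : ℝ≥0∞ :=
  ⨆ E ∈ F, ⨆ _ : x ∈ E, lavg g E

/-- The Fujii–Wilson `A_∞` constant of `w` relative to the family `F`:
`sup_{E∈F} (1/w(E)) ∫_E M_F(w χ_E)`. -/
def fwOn (F : Set (Set X)) (w : X → ℝ) : ℝ≥0∞ :=
  ⨆ E ∈ F, (∫⁻ x in E, famMaxOn F (E.indicator (wE w)) x) / wMeas w E

end Weights

/-- The family `𝓡` of axis-parallel rectangles of `ℝⁿ` (as sets). -/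
def rectFamily (n : ℕ) : Set (Set (ES n)) := Set.range (Rect.set (n := n))

/-- The family of axis-parallel cubes of `ℝⁿ` (as sets). -/
def cubeFamily (n : ℕ) : Set (Set (ES n)) :=
  {E | ∃ (a : Fin n → ℝ) (ℓ : ℝ), 0 < ℓ ∧ E = cubeSet a ℓ}

/-- `[w]_{A_{q,𝓡}}`. -/
def aqR (n : ℕ) (q : ℝ) (w : ES n → ℝ) : ℝ≥0∞ := aqConstOn (rectFamily n) q w

/-- `[w]_{A_q}` over cubes. -/
def aqCube (n : ℕ) (q : ℝ) (w : ES n → ℝ) : ℝ≥0∞ := aqConstOn (cubeFamily n) q w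

/-- The Fujii–Wilson constant `[w]_{A_{∞,𝓡}}`. -/
def fwR (n : ℕ) (w : ES n → ℝ) : ℝ≥0∞ := fwOn (rectFamily n) w

/-- The `SD^s_{p,𝓡}(w)` (smallness-preserving) condition with constant `c` for a functional
`a` on rectangles: for every rectangle `R` and every countable pairwise disjoint family of
dyadic subrectangles of `R`,
`(Σ_i a(R_i)^p w(R_i)/w(R))^{1/p} ≤ c (|⋃ R_i|/|R|)^{1/s} a(R)`. -/
def SDCond (n : ℕ) (p s c : ℝ) (w : ES n → ℝ) (a : Rect n → ℝ) : Prop :=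
  ∀ (R : Rect n) (S : Set ℕ) (T : ℕ → Rect n),
    (∀ i ∈ S, R.DyadicSub (T i)) →
    (S.PairwiseDisjoint fun i => (T i).set) →
    (∑' i : S, ENNReal.ofReal (a (T ↑i)) ^ p * wMeas w (T ↑i).set / wMeas w R.set) ^ (1 / p)
      ≤ ENNReal.ofReal c * (volume (⋃ i ∈ S, (T i).set) / volume R.set) ^ (1 / s) *
          ENNReal.ofReal (a R)

/-- The `D_{p,𝓡}(w)` condition with constant `c` for a functional `a` on rectangles. -/
def DCond (n : ℕ) (p c : ℝ) (w : ES n → ℝ) (a : Rect n → ℝ) : Prop :=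
  ∀ (R : Rect n) (S : Set ℕ) (T : ℕ → Rect n),
    (∀ i ∈ S, R.DyadicSub (T i)) →
    (S.PairwiseDisjoint fun i => (T i).set) →
    (∑' i : S, ENNReal.ofReal (a (T ↑i)) ^ p * wMeas w (T ↑i).set / wMeas w R.set) ^ (1 / p)
      ≤ ENNReal.ofReal (c * a R)

/-- `g` is (everywhere equal to) a polynomial of total degree at most `k` in the `n`
coordinates. -/
def IsPolyDeg (n k : ℕ) (g : ES n → ℝ) : Prop :=
  ∃ p : MvPolynomial (Fin n) ℝ, p.totalDegree ≤ k ∧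
    ∀ x : ES n, g x = MvPolynomial.eval (fun i => x i) p

/-- `g = P_E f`, the orthogonal projection of `f` onto polynomials of degree at most `k`
with respect to the inner product `⟨u,v⟩_E = (1/|E|)∫_E u v`. -/
def IsProjOn (n k : ℕ) (E : Set (ES n)) (f g : ES n → ℝ) : Prop :=
  IsPolyDeg n k g ∧ ∀ φ : ES n → ℝ, IsPolyDeg n k φ → ∫ x in E, (f x - g x) * φ x = 0

/-- `|∇^m f|(x)`: Euclidean norm of the collection of all `m`-th order partial
derivatives of `f` at `x`. -/
def gradmNorm (n m : ℕ) (f : ES n → ℝ) (x : ES n) : ℝ :=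
  Real.sqrt (∑ idx : Fin m → Fin n,
    (iteratedFDeriv ℝ m f x (fun j => EuclideanSpace.single (idx j) (1 : ℝ))) ^ 2)

/-- The dyadic maximal function relative to the rectangle `R`. -/
def dyadMax {n : ℕ} (R : Rect n) (g : ES n → ℝ≥0∞) (x : ES n) : ℝ≥0∞ :=
  ⨆ J : Rect n, ⨆ _ : R.DyadicSub J, ⨆ _ : x ∈ J.set, lavg g J.set

/-- The sharp maximal function `M_k^♯ f(x) = sup_{R ∋ x} ⨍_R |f − P_R f|`, where `P R`
is (assumed to be) the degree-`k` polynomial projection of `f` on `R`. -/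
def sharpMax (n : ℕ) (f : ES n → ℝ) (P : Rect n → ES n → ℝ) (x : ES n) : ℝ≥0∞ :=
  ⨆ R : Rect n, ⨆ _ : x ∈ R.set, lavg (fun y => en (f y - P R y)) R.set

/-- A rectangle of the biparameter family `𝓡_c`: a product of two axis-parallel cubes
`I₁ ⊂ ℝ^{n₁}`, `I₂ ⊂ ℝ^{n₂}`. -/
structure CRect (n₁ n₂ : ℕ) where
  c₁ : Fin n₁ → ℝ
  c₂ : Fin n₂ → ℝ
  l₁ : ℝ
  l₂ : ℝ
  hl₁ : 0 < l₁
  hl₂ : 0 < l₂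

/-- The underlying set `I₁ × I₂` of a biparameter rectangle. -/
def CRect.set {n₁ n₂ : ℕ} (R : CRect n₁ n₂) : Set (ES n₁ × ES n₂) :=
  (cubeSet R.c₁ R.l₁) ×ˢ (cubeSet R.c₂ R.l₂)

/-- The family `𝓡_c` (as sets). -/
def cRectFamily (n₁ n₂ : ℕ) : Set (Set (ES n₁ × ES n₂)) :=
  Set.range (CRect.set (n₁ := n₁) (n₂ := n₂))

/-- `[w]_{A_{q,𝓡_c}}`. -/
def aqC (n₁ n₂ : ℕ) (q : ℝ) (w : ES n₁ × ES n₂ → ℝ) : ℝ≥0∞ :=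
  aqConstOn (cRectFamily n₁ n₂) q w

/-- `|∇₁ f|(z)`: Euclidean norm of the partial gradient of `f` in the first `n₁`
variables (via the a.e.-defined Fréchet derivative). -/
def grad1Norm (n₁ n₂ : ℕ) (f : ES n₁ × ES n₂ → ℝ) (z : ES n₁ × ES n₂) : ℝ :=
  Real.sqrt (∑ i : Fin n₁, (fderiv ℝ f z (EuclideanSpace.single i (1 : ℝ), 0)) ^ 2)

/-- `|∇₂ f|(z)`: Euclidean norm of the partial gradient of `f` in the last `n₂`
variables. -/
def grad2Norm (n₁ n₂ : ℕ) (f : ES n₁ × ES n₂ → ℝ) (z : ES n₁ × ES n₂) : ℝ :=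
  Real.sqrt (∑ i : Fin n₂, (fderiv ℝ f z (0, EuclideanSpace.single i (1 : ℝ))) ^ 2)

lemma fderiv_trunc_le {n : ℕ} (g : ES n → ℝ) (hg : Continuous g) (c m : ℝ) (hm : 0 < m)
    (x : ES n) :
    (‖fderiv ℝ (fun y => min (max (g y - c) 0) m) x‖₊ : ℝ≥0∞)
      ≤ if c < g x ∧ g x < c + m then (‖fderiv ℝ g x‖₊ : ℝ≥0∞) else 0 := by
  set h : ES n → ℝ := fun y => min (max (g y - c) 0) m with hh
  rcases lt_trichotomy (g x) c with h1 | h1 | h1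
  · have hev : h =ᶠ[nhds x] fun _ => (0:ℝ) := by
      filter_upwards [(isOpen_lt hg continuous_const).mem_nhds h1] with y hy
      have : g y - c < 0 := by linarith [hy]
      simp [hh, max_eq_right this.le, min_eq_left hm.le]
    have h0 : fderiv ℝ h x = 0 := by rw [hev.fderiv_eq, fderiv_fun_const]; rfl
    simp [h0]
  · have hmin : IsLocalMin h x := by
      apply Filter.Eventually.of_forall
      intro y
      have hx0 : h x = 0 := by simp [hh, h1, min_eq_left hm.le]
      rw [hx0]
      exact le_min (le_max_right _ _) hm.le
    rw [hmin.fderiv_eq_zero]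
    simp
  · rcases lt_trichotomy (g x) (c + m) with h2 | h2 | h2
    · have hev : h =ᶠ[nhds x] fun y => g y - c := by
        filter_upwards [(isOpen_lt continuous_const hg).mem_nhds h1,
          (isOpen_lt hg continuous_const).mem_nhds h2] with y hy1 hy2
        
        have h3 : (0:ℝ) ≤ g y - c := by linarith
        have h4 : g y - c ≤ m := by linarith
        simp [hh, max_eq_left h3, min_eq_left h4]
      rw [hev.fderiv_eq, fderiv_sub_const, if_pos ⟨h1, h2⟩]
    · have hmax : IsLocalMax h x := by
        apply Filter.Eventually.of_forall
        intro y
        have hx0 : h x = m := by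
          have hgx : g x - c = m := by linarith
          simp [hh, hgx, max_eq_left hm.le]
        rw [hx0]
        exact min_le_right _ _
      rw [hmax.fderiv_eq_zero]
      simp
    · have hev : h =ᶠ[nhds x] fun _ => m := by
        filter_upwards [(isOpen_lt continuous_const hg).mem_nhds h2] with y hy
        have h3 : (0:ℝ) ≤ g y - c := by linarith
        have h4 : m ≤ g y - c := by linarith
        simp [hh, max_eq_left h3, min_eq_right h4]
      have h0 : fderiv ℝ h x = 0 := by rw [hev.fderiv_eq, fderiv_fun_const]; rfl
      simp [h0]

lemma tsum_rpow_le' {ι : Type*} [Countable ι] (f : ι → ℝ≥0∞) (r : ℝ) (hr : 1 ≤ r) :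
    ∑' i, f i ^ r ≤ (∑' i, f i) ^ r := by
  have hr0 : (0:ℝ) < r := by linarith
  set S := ∑' i, f i with hS
  rcases eq_or_ne S ∞ with hT | hT
  · rw [hT, ENNReal.top_rpow_of_pos hr0]; exact le_top
  rcases eq_or_ne S 0 with h0 | h0
  · have hf0 : ∀ i, f i = 0 := fun i =>
      le_antisymm (h0 ▸ ENNReal.le_tsum i) (zero_le)
    simp [hf0, ENNReal.zero_rpow_of_pos hr0, h0]
  · have hb : ∀ i, f i ^ r ≤ S ^ (r - 1) * f i := by
      intro i
      rcases eq_or_ne (f i) 0 with hi0 | hi0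
      · simp [hi0, ENNReal.zero_rpow_of_pos hr0]
      · have hfi : f i ≠ ∞ := ne_top_of_le_ne_top hT (ENNReal.le_tsum i)
        calc f i ^ r = f i ^ (r - 1 + 1) := by norm_num
          _ = f i ^ (r - 1) * f i := by
              rw [ENNReal.rpow_add _ _ hi0 hfi, ENNReal.rpow_one]
          _ ≤ S ^ (r - 1) * f i :=
              mul_le_mul_left (ENNReal.rpow_le_rpow (ENNReal.le_tsum i) (by linarith)) _
    calc ∑' i, f i ^ r ≤ ∑' i, S ^ (r - 1) * f i := ENNReal.tsum_le_tsum hb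
      _ = S ^ (r - 1) * S := by rw [ENNReal.tsum_mul_left]
      _ = S ^ r := by
          have h := ENNReal.rpow_add (r - 1) 1 h0 hT
          rw [ENNReal.rpow_one] at h
          rw [← h]
          norm_num

/-- truncation method: the weak `(q,p)` Sobolev-type estimate for all
nonnegative Lipschitz functions implies the strong one. -/
theorem stmt19 (n : ℕ) (hn : 1 ≤ n) (p q : ℝ) (hq : 1 ≤ q) (hqp : q < p) :
    ∃ C : ℝ, 0 < C ∧
      ∀ (μ ν : Measure (ES n)) (A : ℝ),
        (∀ g : ES n → ℝ, (∃ K, LipschitzWith K g) → (∀ x, 0 ≤ g x) →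
          ∀ t : ℝ, 0 < t →
            ENNReal.ofReal t * μ {x | t < g x} ^ (1 / p)
              ≤ ENNReal.ofReal A * (∫⁻ x, (‖fderiv ℝ g x‖₊ : ℝ≥0∞) ^ q ∂ν) ^ (1 / q)) →
        ∀ g : ES n → ℝ, (∃ K, LipschitzWith K g) → (∀ x, 0 ≤ g x) →
          (∫⁻ x, ENNReal.ofReal (g x) ^ p ∂μ) ^ (1 / p)
            ≤ ENNReal.ofReal (C * A) * (∫⁻ x, (‖fderiv ℝ g x‖₊ : ℝ≥0∞) ^ q ∂ν) ^ (1 / q) := by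
  refine ⟨8, by norm_num, ?_⟩
  intro μ ν A hweak g hLip hg0
  obtain ⟨K, hK⟩ := hLip
  have hgc : Continuous g := hK.continuous
  have hq0 : (0:ℝ) < q := by linarith
  have hp0 : (0:ℝ) < p := by linarith
  have hpne : p ≠ 0 := ne_of_gt hp0
  have hqne : q ≠ 0 := ne_of_gt hq0
  have h2 : ∀ k : ℤ, (0:ℝ) < 2 ^ k := fun k => zpow_pos two_pos k
  set I : ℝ≥0∞ := ∫⁻ x, (‖fderiv ℝ g x‖₊ : ℝ≥0∞) ^ q ∂ν with hI
  set G : ℤ → ES n → ℝ := fun k x => min (max (g x - 2 ^ k) 0) (2 ^ k) with hGdef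
  have hGlip : ∀ k : ℤ, LipschitzWith K (G k) := by
    intro k
    have h1 : LipschitzWith K (fun x => g x - 2 ^ k) :=
      LipschitzWith.of_dist_le_mul fun x y => by
        simpa [Real.dist_eq, sub_sub_sub_cancel_right] using hK.dist_le_mul x y
    exact (h1.max_const 0).min_const _
  have hG0 : ∀ (k : ℤ) x, 0 ≤ G k x := fun k x => le_min (le_max_right _ _) (h2 k).le
  set a : ℤ → ℝ≥0∞ := fun k => ∫⁻ x, (‖fderiv ℝ (G k) x‖₊ : ℝ≥0∞) ^ q ∂ν with ha
  -- the pointwise truncation bound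
  have hb : ∀ (k : ℤ) x, (‖fderiv ℝ (G k) x‖₊ : ℝ≥0∞) ^ q
      ≤ if (2:ℝ)^k < g x ∧ g x < 2^k + 2^k then (‖fderiv ℝ g x‖₊ : ℝ≥0∞) ^ q else 0 := by
    intro k x
    have hle := fderiv_trunc_le g hgc (2^k) (2^k) (h2 k) x
    split_ifs with hcond
    · rw [if_pos hcond] at hle
      exact ENNReal.rpow_le_rpow hle hq0.le
    · rw [if_neg hcond] at hle
      have h00 : (‖fderiv ℝ (G k) x‖₊ : ℝ≥0∞) = 0 := le_antisymm hle (zero_le)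
      rw [h00, ENNReal.zero_rpow_of_pos hq0]
  -- disjointness of the bands
  have huniq : ∀ (y : ℝ) (k k' : ℤ), ((2:ℝ)^k < y ∧ y < 2^k + 2^k) →
      ((2:ℝ)^k' < y ∧ y < 2^k' + 2^k') → k = k' := by
    intro y k k' ⟨h1, h2'⟩ ⟨h3, h4⟩
    have key : ∀ a b : ℤ, a < b → (2:ℝ)^a + 2^a ≤ 2^b := by
      intro a b hab
      have e1 : (2:ℝ)^a + 2^a = 2^(a+1) := by
        rw [zpow_add_one₀ (two_ne_zero)]; ring
      rw [e1]
      exact zpow_le_zpow_right₀ one_le_two (by omega)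
    by_contra hne
    rcases lt_or_gt_of_ne hne with hlt | hlt
    · linarith [key k k' hlt]
    · linarith [key k' k hlt]
  -- Step A : sum of truncated energies
  have hsum : ∑' k : ℤ, a k ≤ I := by
    have hmeas : ∀ k : ℤ, Measurable fun x => (‖fderiv ℝ (G k) x‖₊ : ℝ≥0∞) ^ q :=
      fun k => ENNReal.continuous_rpow_const.measurable.comp
        ((measurable_fderiv ℝ (G k)).nnnorm.coe_nnreal_ennreal)
    rw [ha, ← lintegral_tsum fun k => (hmeas k).aemeasurable]
    refine lintegral_mono fun x => ?_
    calc ∑' k : ℤ, (‖fderiv ℝ (G k) x‖₊ : ℝ≥0∞) ^ q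
        ≤ ∑' k : ℤ, if (2:ℝ)^k < g x ∧ g x < 2^k + 2^k
            then (‖fderiv ℝ g x‖₊ : ℝ≥0∞) ^ q else 0 := ENNReal.tsum_le_tsum fun k => hb k x
      _ ≤ (‖fderiv ℝ g x‖₊ : ℝ≥0∞) ^ q := by
          by_cases hex : ∃ k : ℤ, (2:ℝ)^k < g x ∧ g x < 2^k + 2^k
          · obtain ⟨k0, hk0⟩ := hex
            rw [tsum_eq_single k0 (fun k hk => if_neg fun hc => hk (huniq (g x) k k0 hc hk0))]
            rw [if_pos hk0]
          · push_neg at hex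
            have : ∀ k : ℤ, (if (2:ℝ)^k < g x ∧ g x < 2^k + 2^k
                then (‖fderiv ℝ g x‖₊ : ℝ≥0∞) ^ q else 0) = 0 := by
              intro k
              rw [if_neg]
              intro hc
              exact absurd hc.2 (not_lt.2 (hex k hc.1))
            rw [tsum_congr this, tsum_zero]
            exact zero_le
  -- Step B : layer-cake bound
  have hlayer : (∫⁻ x, ENNReal.ofReal (g x) ^ p ∂μ)
      ≤ ∑' k : ℤ, ENNReal.ofReal ((2:ℝ) ^ (k+1)) ^ p * μ {x | (2:ℝ)^k < g x} := by
    have hEm : ∀ k : ℤ, MeasurableSet {x : ES n | g x ∈ Set.Ioc ((2:ℝ)^k) (2^(k+1))} :=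
      fun k => hgc.measurable measurableSet_Ioc
    calc ∫⁻ x, ENNReal.ofReal (g x) ^ p ∂μ
        ≤ ∫⁻ x, ∑' k : ℤ, ({x : ES n | g x ∈ Set.Ioc ((2:ℝ)^k) (2^(k+1))}).indicator
            (fun _ => ENNReal.ofReal ((2:ℝ)^(k+1)) ^ p) x ∂μ := by
          refine lintegral_mono fun x => ?_
          rcases le_or_gt (g x) 0 with hx0 | hx0
          · simp [ENNReal.ofReal_eq_zero.2 hx0, ENNReal.zero_rpow_of_pos hp0]
          · obtain ⟨k, hk⟩ := exists_mem_Ioc_zpow hx0 one_lt_two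
            refine le_trans ?_ (ENNReal.le_tsum k)
            rw [Set.indicator_of_mem (show x ∈ {x : ES n | g x ∈ Set.Ioc ((2:ℝ)^k) (2^(k+1))} from hk)]
            exact ENNReal.rpow_le_rpow (ENNReal.ofReal_le_ofReal hk.2) hp0.le
      _ = ∑' k : ℤ, ∫⁻ x, ({x : ES n | g x ∈ Set.Ioc ((2:ℝ)^k) (2^(k+1))}).indicator
            (fun _ => ENNReal.ofReal ((2:ℝ)^(k+1)) ^ p) x ∂μ :=
          lintegral_tsum fun k => (measurable_const.indicator (hEm k)).aemeasurable
      _ ≤ ∑' k : ℤ, ENNReal.ofReal ((2:ℝ) ^ (k+1)) ^ p * μ {x | (2:ℝ)^k < g x} := by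
          refine ENNReal.tsum_le_tsum fun k => ?_
          rw [lintegral_indicator_const (hEm k)]
          exact mul_le_mul_right (measure_mono fun x hx => hx.1) _
  -- Step C : weak-type bound on each level
  have hμk : ∀ k : ℤ, μ {x | (2:ℝ)^k < g x}
      ≤ ((ENNReal.ofReal A * a (k-1) ^ (1/q)) / ENNReal.ofReal ((2:ℝ)^(k-2))) ^ p := by
    intro k
    have ht : (0:ℝ) < 2^(k-2) := h2 _
    have hw := hweak (G (k-1)) ⟨K, hGlip (k-1)⟩ (hG0 (k-1)) ((2:ℝ)^(k-2)) ht
    have hsub : {x : ES n | (2:ℝ)^k < g x} ⊆ {x | (2:ℝ)^(k-2) < G (k-1) x} := by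
      intro x hx
      simp only [Set.mem_setOf_eq] at hx ⊢
      have e1 : (2:ℝ)^k = 2^(k-1) * 2 := by
        rw [← zpow_add_one₀ (two_ne_zero : (2:ℝ) ≠ 0)]
        norm_num
      have e2 : (2:ℝ)^(k-2) < 2^(k-1) := zpow_lt_zpow_right₀ one_lt_two (by omega)
      have e3 : (2:ℝ)^(k-2) < g x - 2^(k-1) := by nlinarith [h2 (k-1)]
      exact lt_min (lt_max_of_lt_left e3) e2
    have hM : μ {x | (2:ℝ)^(k-2) < G (k-1) x} ^ (1/p)
        ≤ (ENNReal.ofReal A * a (k-1) ^ (1/q)) / ENNReal.ofReal ((2:ℝ)^(k-2)) := by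
      rw [ENNReal.le_div_iff_mul_le (Or.inl (ENNReal.ofReal_pos.2 ht).ne')
        (Or.inl ENNReal.ofReal_ne_top)]
      rw [mul_comm]
      exact hw
    calc μ {x | (2:ℝ)^k < g x} ≤ μ {x | (2:ℝ)^(k-2) < G (k-1) x} := measure_mono hsub
      _ = (μ {x | (2:ℝ)^(k-2) < G (k-1) x} ^ (1/p)) ^ p := by
          rw [← ENNReal.rpow_mul, one_div_mul_cancel hpne, ENNReal.rpow_one]
      _ ≤ ((ENNReal.ofReal A * a (k-1) ^ (1/q)) / ENNReal.ofReal ((2:ℝ)^(k-2))) ^ p :=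
          ENNReal.rpow_le_rpow hM hp0.le
  -- Step D : termwise algebra
  have hterm : ∀ k : ℤ, ENNReal.ofReal ((2:ℝ)^(k+1)) ^ p *
      ((ENNReal.ofReal A * a (k-1) ^ (1/q)) / ENNReal.ofReal ((2:ℝ)^(k-2))) ^ p
      = (ENNReal.ofReal 8 * ENNReal.ofReal A) ^ p * a (k-1) ^ (1/q*p) := by
    intro k
    set z := ENNReal.ofReal ((2:ℝ)^(k-2)) with hz
    have hz0 : z ≠ 0 := (ENNReal.ofReal_pos.2 (h2 _)).ne'
    have hzt : z ≠ ∞ := ENNReal.ofReal_ne_top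
    have hzp0 : z ^ p ≠ 0 := by
      intro hcon
      rcases ENNReal.rpow_eq_zero_iff.mp hcon with ⟨h', _⟩ | ⟨h', _⟩
      · exact hz0 h'
      · exact hzt h'
    have hzpt : z ^ p ≠ ∞ := by
      intro hcon
      rcases ENNReal.rpow_eq_top_iff.mp hcon with ⟨h', _⟩ | ⟨h', _⟩
      · exact hz0 h'
      · exact hzt h'
    have h8 : ENNReal.ofReal ((2:ℝ)^(k+1)) = ENNReal.ofReal 8 * z := by
      rw [hz, ← ENNReal.ofReal_mul (by norm_num : (0:ℝ) ≤ 8)]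
      congr 1
      rw [show k + 1 = (k-2) + 3 by omega, zpow_add₀ (two_ne_zero : (2:ℝ) ≠ 0)]
      norm_num
      ring
    rw [h8, ENNReal.mul_rpow_of_nonneg _ _ hp0.le, ENNReal.div_rpow_of_nonneg _ _ hp0.le,
      ENNReal.mul_rpow_of_nonneg _ _ hp0.le, ← ENNReal.rpow_mul,
      ENNReal.mul_rpow_of_nonneg (ENNReal.ofReal 8) (ENNReal.ofReal A) hp0.le,
      mul_assoc, mul_comm (z ^ p), ENNReal.div_mul_cancel hzp0 hzpt]
    ring
  -- Conclusion
  have hr1 : (1:ℝ) ≤ 1/q*p := by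
    rw [one_div, inv_mul_eq_div, le_div_iff₀ hq0]
    linarith
  have main : (∫⁻ x, ENNReal.ofReal (g x) ^ p ∂μ)
      ≤ (ENNReal.ofReal 8 * ENNReal.ofReal A) ^ p * I ^ (1/q*p) := by
    calc (∫⁻ x, ENNReal.ofReal (g x) ^ p ∂μ)
        ≤ ∑' k : ℤ, ENNReal.ofReal ((2:ℝ) ^ (k+1)) ^ p * μ {x | (2:ℝ)^k < g x} := hlayer
      _ ≤ ∑' k : ℤ, (ENNReal.ofReal 8 * ENNReal.ofReal A) ^ p * a (k-1) ^ (1/q*p) := by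
          refine ENNReal.tsum_le_tsum fun k => ?_
          rw [← hterm k]
          exact mul_le_mul_right (hμk k) _
      _ = (ENNReal.ofReal 8 * ENNReal.ofReal A) ^ p * ∑' k : ℤ, a (k-1) ^ (1/q*p) :=
          ENNReal.tsum_mul_left
      _ = (ENNReal.ofReal 8 * ENNReal.ofReal A) ^ p * ∑' k : ℤ, a k ^ (1/q*p) := by
          congr 1
          exact (Equiv.subRight (1:ℤ)).tsum_eq fun k => a k ^ (1/q*p)
      _ ≤ (ENNReal.ofReal 8 * ENNReal.ofReal A) ^ p * (∑' k : ℤ, a k) ^ (1/q*p) :=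
          mul_le_mul_right (tsum_rpow_le' a _ hr1) _
      _ ≤ (ENNReal.ofReal 8 * ENNReal.ofReal A) ^ p * I ^ (1/q*p) :=
          mul_le_mul_right (ENNReal.rpow_le_rpow hsum (by linarith)) _
  calc (∫⁻ x, ENNReal.ofReal (g x) ^ p ∂μ) ^ (1/p)
      ≤ ((ENNReal.ofReal 8 * ENNReal.ofReal A) ^ p * I ^ (1/q*p)) ^ (1/p) :=
        ENNReal.rpow_le_rpow main (by positivity)
    _ = ENNReal.ofReal (8 * A) * I ^ (1/q) := by
        rw [ENNReal.mul_rpow_of_nonneg _ _ (by positivity), ← ENNReal.rpow_mul,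
          ← ENNReal.rpow_mul, mul_one_div_cancel hpne, ENNReal.rpow_one,
          ENNReal.ofReal_mul (by norm_num : (0:ℝ) ≤ 8),
          show 1/q*p*(1/p) = 1/q by field_simp]

end
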